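/- Assume: Ψ, ∂Ψ/∂r, Y, Q, Q' satisfy, as (r,R)→(0,0) and r→0⁺ respectively, Ψ(r,R) = ψ₃₀r³ + ψ₂₁r²R + ψ₁₂rR² + ψ₀₃R³ + o((|r|+|R|)³), ∂Ψ/∂r(r,R) = 3ψ₃₀r² + 2ψ₂₁rR + ψ₁₂R² + o((|r|+|R|)²), Y(r,R) = 1 + y₂₀r² + y₁₁rR + y₀₂R² + o((|r|+|R|)²), Q(r) = q₀r³ + o(r³), Q'(r) = 3q₀r² + o(r²), with 0 < |q₀| < ψ₃₀. Define Ψ₁ := Ψ − Q²/(2R), Y₁ := (1 − QQ'/(R·∂Ψ/∂r))·Y, u₁² := 2Ψ₁/R − 1 + Y₁². Let 0 < c₁ ≤ c₂ and let R_u : (0,ε) → ℝ satisfy c₁r³ ≤ R_u(r) ≤ c₂r³ and u₁²(r,R_u(r)) = 0 for all r ∈ (0,ε). Then lim_{r→0⁺} R_u(r)/r³ = q₀²/(2ψ₃₀). -/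

import Mathlib

open Filter Topology Asymptotics

private lemma alg_aux (P Pr y q q' R r : ℝ) (hr : r ≠ 0) (hR : R ≠ 0) (hPr : Pr ≠ 0)
    (hden : 2*(P/r^3) - 2*y^2*(q/r^3)*(q'/r^2)/(Pr/r^2) ≠ 0)
    (hu : 2 * (P - q ^ 2 / (2 * R)) / R - 1 + ((1 - q * q' / (R * Pr)) * y) ^ 2 = 0) :
    R/r^3 = ((q/r^3)^2 - y^2*(q/r^3)^2*(q'/r^2)^2/(Pr/r^2)^2 - (R/r^3)^2*(y^2-1))
      / (2*(P/r^3) - 2*y^2*(q/r^3)*(q'/r^2)/(Pr/r^2)) := by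
  field_simp at hu
  have h2R : (2*R^2 : ℝ) ≠ 0 := by positivity
  have hu2 : (2*P*R - q^2 - R^2)*Pr^2 + ((R*Pr - q*q')*y)^2 = 0 := by
    apply mul_left_cancel₀ h2R
    linear_combination (2*R^2) * hu
  rw [eq_div_iff hden]
  field_simp
  linear_combination hu2


/-- The charged velocity function
`u₁²(r,R) = 2Ψ₁/R − 1 + Y₁²`, with `Ψ₁ = Ψ − Q²/(2R)` and
`Y₁ = (1 − QQ'/(R·∂Ψ/∂r))·Y`. -/
noncomputable def u1sq (Ψ Ψr Y : ℝ → ℝ → ℝ) (Q Q' : ℝ → ℝ) (r R : ℝ) : ℝ :=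
  2 * (Ψ r R - Q r ^ 2 / (2 * R)) / R - 1
    + ((1 - Q r * Q' r / (R * Ψr r R)) * Y r R) ^ 2

set_option maxHeartbeats 2000000 in
/-- Equation (101): in the case `p = 1`, `ψ₃₀ > |q₀|`, any curve `R_u`
pinched between `c₁r³` and `c₂r³` on which `u₁²` vanishes satisfies
`R_u(r) = (q₀²/(2ψ₃₀))·r³ + o(r³)`. -/
theorem vanishing_curve_asymptotics_p_one
    (Ψ Ψr Y : ℝ → ℝ → ℝ) (Q Q' : ℝ → ℝ)
    (ψ30 ψ21 ψ12 ψ03 y20 y11 y02 q0 : ℝ)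
    (hq0 : 0 < |q0|) (hlt : |q0| < ψ30)
    (hlink : ∀ r R, HasDerivAt (fun s => Ψ s R) (Ψr r R) r)
    (hQd : ∀ r, HasDerivAt Q (Q' r) r)
    (hΨ : (fun q : ℝ × ℝ =>
        Ψ q.1 q.2 - (ψ30*q.1^3 + ψ21*q.1^2*q.2 + ψ12*q.1*q.2^2 + ψ03*q.2^3))
      =o[nhds ((0:ℝ), (0:ℝ))] fun q : ℝ × ℝ => (|q.1| + |q.2|)^3)
    (hΨr : (fun q : ℝ × ℝ =>
        Ψr q.1 q.2 - (3*ψ30*q.1^2 + 2*ψ21*q.1*q.2 + ψ12*q.2^2))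
      =o[nhds ((0:ℝ), (0:ℝ))] fun q : ℝ × ℝ => (|q.1| + |q.2|)^2)
    (hY : (fun q : ℝ × ℝ =>
        Y q.1 q.2 - (1 + y20*q.1^2 + y11*q.1*q.2 + y02*q.2^2))
      =o[nhds ((0:ℝ), (0:ℝ))] fun q : ℝ × ℝ => (|q.1| + |q.2|)^2)
    (hQ : (fun r : ℝ => Q r - q0 * r^3) =o[𝓝[>] (0:ℝ)] fun r : ℝ => r^3)
    (hQ' : (fun r : ℝ => Q' r - 3 * q0 * r^2) =o[𝓝[>] (0:ℝ)] fun r : ℝ => r^2)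
    (c₁ c₂ ε : ℝ) (hc₁ : 0 < c₁) (hc₁₂ : c₁ ≤ c₂) (hε : 0 < ε)
    (Ru : ℝ → ℝ)
    (hRu : ∀ r ∈ Set.Ioo (0:ℝ) ε,
      c₁ * r^3 ≤ Ru r ∧ Ru r ≤ c₂ * r^3 ∧ u1sq Ψ Ψr Y Q Q' r (Ru r) = 0) :
    Tendsto (fun r : ℝ => Ru r / r^3) (𝓝[>] (0:ℝ)) (𝓝 (q0^2 / (2*ψ30))) := by
  set l := 𝓝[>] (0:ℝ) with hl
  have hψ30 : 0 < ψ30 := lt_of_le_of_lt (abs_nonneg q0) hlt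
  have hq2 : q0^2 < ψ30^2 := by
    nlinarith [sq_abs q0, abs_nonneg q0]
  have hc₂ : 0 < c₂ := lt_of_lt_of_le hc₁ hc₁₂
  -- basic eventual facts
  have hmem : ∀ᶠ r in l, r ∈ Set.Ioo (0:ℝ) ε :=
    Ioo_mem_nhdsGT_of_mem ⟨le_refl 0, hε⟩
  have hmem1 : ∀ᶠ r in l, r ∈ Set.Ioo (0:ℝ) (min ε 1) :=
    Ioo_mem_nhdsGT_of_mem ⟨le_refl 0, lt_min hε one_pos⟩
  have hrpos : ∀ᶠ r in l, 0 < r := self_mem_nhdsWithin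
  have h0 : Tendsto (fun r : ℝ => r) l (𝓝 0) := tendsto_id.mono_left nhdsWithin_le_nhds
  have h3 : Tendsto (fun r : ℝ => r^3) l (𝓝 0) := by simpa using h0.pow 3
  have hlow : Tendsto (fun r : ℝ => c₁ * r^3) l (𝓝 0) := by simpa using h3.const_mul c₁
  have hhigh : Tendsto (fun r : ℝ => c₂ * r^3) l (𝓝 0) := by simpa using h3.const_mul c₂
  have hRu0 : Tendsto Ru l (𝓝 0) := by
    apply tendsto_of_tendsto_of_tendsto_of_le_of_le' hlow hhigh
    · filter_upwards [hmem] with r hr using (hRu r hr).1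
    · filter_upwards [hmem] with r hr using (hRu r hr).2.1
  have hg2 : Tendsto (fun r : ℝ => (r, Ru r)) l (𝓝 ((0:ℝ), (0:ℝ))) := h0.prodMk_nhds hRu0
  -- u = Ru r / r → 0
  have hu0 : Tendsto (fun r : ℝ => Ru r / r) l (𝓝 0) := by
    apply tendsto_of_tendsto_of_tendsto_of_le_of_le' tendsto_const_nhds
      (show Tendsto (fun r : ℝ => c₂ * r^2) l (𝓝 0) by simpa using (h0.pow 2).const_mul c₂)
    · filter_upwards [hmem] with r hr
      have hr0 : 0 < r := hr.1
      have : (0:ℝ) < Ru r := lt_of_lt_of_le (by positivity) (hRu r hr).1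
      positivity
    · filter_upwards [hmem] with r hr
      have hr0 : 0 < r := hr.1
      rw [div_le_iff₀ hr0]
      calc Ru r ≤ c₂ * r^3 := (hRu r hr).2.1
        _ = c₂ * r^2 * r := by ring
  -- big-O bounds for the weights
  have hw3 : (fun r : ℝ => (|r| + |Ru r|)^3) =O[l] fun r : ℝ => r^3 := by
    apply IsBigO.of_bound ((1+c₂)^3)
    filter_upwards [hmem1, hmem] with r hr1 hr
    have hr0 : 0 < r := hr.1
    have hRupos : (0:ℝ) < Ru r := lt_of_lt_of_le (by positivity) (hRu r hr).1
    have hr1' : r ≤ 1 := le_of_lt (lt_of_lt_of_le hr1.2 (min_le_right _ _))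
    have hb : |r| + |Ru r| ≤ (1+c₂) * r := by
      rw [abs_of_pos hr0, abs_of_pos hRupos]
      have hr3 : r^3 ≤ r := by nlinarith [mul_nonneg (mul_nonneg hr0.le (sub_nonneg.2 hr1')) (by linarith : (0:ℝ) ≤ 1 + r)]
      have : Ru r ≤ c₂ * r := le_trans (hRu r hr).2.1 (mul_le_mul_of_nonneg_left hr3 hc₂.le)
      nlinarith
    have hnn : (0:ℝ) ≤ |r| + |Ru r| := by positivity
    rw [Real.norm_eq_abs, Real.norm_eq_abs, abs_of_nonneg (by positivity),
      abs_of_pos (by positivity : (0:ℝ) < r^3)]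
    nlinarith [pow_le_pow_left₀ hnn hb 3]
  have hw2 : (fun r : ℝ => (|r| + |Ru r|)^2) =O[l] fun r : ℝ => r^2 := by
    apply IsBigO.of_bound ((1+c₂)^2)
    filter_upwards [hmem1, hmem] with r hr1 hr
    have hr0 : 0 < r := hr.1
    have hRupos : (0:ℝ) < Ru r := lt_of_lt_of_le (by positivity) (hRu r hr).1
    have hr1' : r ≤ 1 := le_of_lt (lt_of_lt_of_le hr1.2 (min_le_right _ _))
    have hb : |r| + |Ru r| ≤ (1+c₂) * r := by
      rw [abs_of_pos hr0, abs_of_pos hRupos]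
      have hr3 : r^3 ≤ r := by nlinarith [mul_nonneg (mul_nonneg hr0.le (sub_nonneg.2 hr1')) (by linarith : (0:ℝ) ≤ 1 + r)]
      have : Ru r ≤ c₂ * r := le_trans (hRu r hr).2.1 (mul_le_mul_of_nonneg_left hr3 hc₂.le)
      nlinarith
    have hnn : (0:ℝ) ≤ |r| + |Ru r| := by positivity
    rw [Real.norm_eq_abs, Real.norm_eq_abs, abs_of_nonneg (by positivity),
      abs_of_pos (by positivity : (0:ℝ) < r^2)]
    nlinarith [pow_le_pow_left₀ hnn hb 2]
  -- A : Ψ(r,Ru r)/r³ → ψ30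
  have hA : Tendsto (fun r : ℝ => Ψ r (Ru r) / r^3) l (𝓝 ψ30) := by
    have h1 : Tendsto (fun r : ℝ =>
        (Ψ r (Ru r) - (ψ30*r^3 + ψ21*r^2*(Ru r) + ψ12*r*(Ru r)^2 + ψ03*(Ru r)^3)) / r^3)
        l (𝓝 0) :=
      ((hΨ.comp_tendsto hg2).trans_isBigO hw3).tendsto_div_nhds_zero
    have h2' : Tendsto (fun r : ℝ =>
        ψ30 + ψ21*(Ru r / r) + ψ12*(Ru r / r)^2 + ψ03*(Ru r / r)^3) l (𝓝 ψ30) := by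
      have := (((tendsto_const_nhds : Tendsto (fun _ : ℝ => ψ30) l (𝓝 ψ30)).add (hu0.const_mul ψ21)).add
        ((hu0.pow 2).const_mul ψ12)).add ((hu0.pow 3).const_mul ψ03)
      simpa using this
    have h2 : Tendsto (fun r : ℝ =>
        (ψ30*r^3 + ψ21*r^2*(Ru r) + ψ12*r*(Ru r)^2 + ψ03*(Ru r)^3) / r^3) l (𝓝 ψ30) := by
      apply h2'.congr'
      filter_upwards [hrpos] with r hr
      have : r ≠ 0 := ne_of_gt hr
      field_simp
    have := h1.add h2
    simp only [zero_add] at this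
    apply this.congr
    intro r
    ring
  -- B : Ψr(r,Ru r)/r² → 3ψ30
  have hB : Tendsto (fun r : ℝ => Ψr r (Ru r) / r^2) l (𝓝 (3*ψ30)) := by
    have h1 : Tendsto (fun r : ℝ =>
        (Ψr r (Ru r) - (3*ψ30*r^2 + 2*ψ21*r*(Ru r) + ψ12*(Ru r)^2)) / r^2) l (𝓝 0) :=
      ((hΨr.comp_tendsto hg2).trans_isBigO hw2).tendsto_div_nhds_zero
    have h2' : Tendsto (fun r : ℝ =>
        3*ψ30 + 2*ψ21*(Ru r / r) + ψ12*(Ru r / r)^2) l (𝓝 (3*ψ30)) := by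
      have := ((tendsto_const_nhds : Tendsto (fun _ : ℝ => 3*ψ30) l (𝓝 (3*ψ30))).add (hu0.const_mul (2*ψ21))).add
        ((hu0.pow 2).const_mul ψ12)
      simpa using this
    have h2 : Tendsto (fun r : ℝ =>
        (3*ψ30*r^2 + 2*ψ21*r*(Ru r) + ψ12*(Ru r)^2) / r^2) l (𝓝 (3*ψ30)) := by
      apply h2'.congr'
      filter_upwards [hrpos] with r hr
      have : r ≠ 0 := ne_of_gt hr
      field_simp
    have := h1.add h2
    simp only [zero_add] at this
    apply this.congr
    intro r
    ring
  -- C : Y(r,Ru r) → 1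
  have hC : Tendsto (fun r : ℝ => Y r (Ru r)) l (𝓝 1) := by
    have hsq0 : Tendsto (fun r : ℝ => (|r| + |Ru r|)^2) l (𝓝 0) := by
      have := (h0.abs.add hRu0.abs).pow 2
      simpa using this
    have h1 : Tendsto (fun r : ℝ =>
        Y r (Ru r) - (1 + y20*r^2 + y11*r*(Ru r) + y02*(Ru r)^2)) l (𝓝 0) :=
      ((hY.comp_tendsto hg2).isBigO).trans_tendsto hsq0
    have h2 : Tendsto (fun r : ℝ =>
        1 + y20*r^2 + y11*r*(Ru r) + y02*(Ru r)^2) l (𝓝 1) := by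
      have := (((tendsto_const_nhds : Tendsto (fun _ : ℝ => (1:ℝ)) l (𝓝 1)).add ((h0.pow 2).const_mul y20)).add
        ((h0.const_mul y11).mul hRu0)).add ((hRu0.pow 2).const_mul y02)
      simpa using this
    have := h1.add h2
    simp only [zero_add] at this
    apply this.congr
    intro r
    ring
  -- D : Q r / r³ → q0
  have hD : Tendsto (fun r : ℝ => Q r / r^3) l (𝓝 q0) := by
    have h1 : Tendsto (fun r : ℝ => (Q r - q0 * r^3) / r^3) l (𝓝 0) :=
      hQ.tendsto_div_nhds_zero
    have := h1.add ((tendsto_const_nhds : Tendsto (fun _ : ℝ => q0) l (𝓝 q0)))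
    simp only [zero_add] at this
    apply this.congr'
    filter_upwards [hrpos] with r hr
    have : r ≠ 0 := ne_of_gt hr
    field_simp
    ring
  -- E : Q' r / r² → 3q0
  have hE : Tendsto (fun r : ℝ => Q' r / r^2) l (𝓝 (3*q0)) := by
    have h1 : Tendsto (fun r : ℝ => (Q' r - 3 * q0 * r^2) / r^2) l (𝓝 0) :=
      hQ'.tendsto_div_nhds_zero
    have := h1.add ((tendsto_const_nhds : Tendsto (fun _ : ℝ => 3*q0) l (𝓝 (3*q0))))
    simp only [zero_add] at this
    apply this.congr'
    filter_upwards [hrpos] with r hr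
    have : r ≠ 0 := ne_of_gt hr
    field_simp
    ring
  -- T : (Ru r / r³)² (Y² - 1) → 0
  have hT : Tendsto (fun r : ℝ => (Ru r / r^3)^2 * ((Y r (Ru r))^2 - 1)) l (𝓝 0) := by
    apply squeeze_zero_norm' (a := fun r : ℝ => c₂^2 * |(Y r (Ru r))^2 - 1|)
    · filter_upwards [hmem] with r hr
      have hr0 : 0 < r := hr.1
      have h1 : 0 ≤ Ru r / r^3 := by
        have := lt_of_lt_of_le (by positivity : (0:ℝ) < c₁ * r^3) (hRu r hr).1
        positivity
      have h2 : Ru r / r^3 ≤ c₂ := by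
        rw [div_le_iff₀ (by positivity : (0:ℝ) < r^3)]
        exact (hRu r hr).2.1
      rw [Real.norm_eq_abs, abs_mul, abs_of_nonneg (by positivity : (0:ℝ) ≤ (Ru r / r^3)^2)]
      have : (Ru r / r^3)^2 ≤ c₂^2 := by nlinarith
      exact mul_le_mul_of_nonneg_right this (abs_nonneg _)
    · have h1 : Tendsto (fun r : ℝ => (Y r (Ru r))^2 - 1) l (𝓝 0) := by
        have := (hC.pow 2).sub_const 1
        simpa using this
      have := (h1.abs).const_mul (c₂^2)
      simpa using this
  -- limits of num and den
  have hBne : (3*ψ30 : ℝ) ≠ 0 := by positivity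
  have hden : Tendsto (fun r : ℝ =>
      2*(Ψ r (Ru r)/r^3) - 2*(Y r (Ru r))^2*(Q r/r^3)*(Q' r/r^2)/(Ψr r (Ru r)/r^2))
      l (𝓝 (2*ψ30 - 2*q0^2/ψ30)) := by
    have h := (hA.const_mul 2).sub
      (((((hC.pow 2).const_mul 2).mul hD).mul hE).div hB hBne)
    have heq : 2*ψ30 - 2*1^2*q0*(3*q0)/(3*ψ30) = 2*ψ30 - 2*q0^2/ψ30 := by
      field_simp
    rw [heq] at h
    exact h
  have hnum : Tendsto (fun r : ℝ =>
      (Q r/r^3)^2 - (Y r (Ru r))^2*(Q r/r^3)^2*(Q' r/r^2)^2/(Ψr r (Ru r)/r^2)^2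
        - (Ru r/r^3)^2*((Y r (Ru r))^2-1)) l (𝓝 (q0^2 - q0^4/ψ30^2)) := by
    have h := ((hD.pow 2).sub
      ((((hC.pow 2).mul (hD.pow 2)).mul (hE.pow 2)).div (hB.pow 2) (by positivity))).sub hT
    have heq : q0^2 - 1^2*q0^2*(3*q0)^2/(3*ψ30)^2 - 0 = q0^2 - q0^4/ψ30^2 := by
      field_simp
      ring
    rw [heq] at h
    exact h
  have hdenL : (2*ψ30 - 2*q0^2/ψ30 : ℝ) ≠ 0 := by
    have : (0:ℝ) < 2*ψ30 - 2*q0^2/ψ30 := by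
      rw [sub_pos, div_lt_iff₀ hψ30]
      nlinarith
    exact ne_of_gt this
  have hratio : Tendsto (fun r : ℝ =>
      ((Q r/r^3)^2 - (Y r (Ru r))^2*(Q r/r^3)^2*(Q' r/r^2)^2/(Ψr r (Ru r)/r^2)^2
        - (Ru r/r^3)^2*((Y r (Ru r))^2-1))
      / (2*(Ψ r (Ru r)/r^3) - 2*(Y r (Ru r))^2*(Q r/r^3)*(Q' r/r^2)/(Ψr r (Ru r)/r^2)))
      l (𝓝 (q0^2/(2*ψ30))) := by
    have h := hnum.div hden hdenL
    have heq : (q0^2 - q0^4/ψ30^2) / (2*ψ30 - 2*q0^2/ψ30) = q0^2/(2*ψ30) := by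
      rw [div_eq_div_iff hdenL (by positivity)]
      field_simp
    rw [heq] at h
    exact h
  -- conclude via eventual equality
  have hBne' : ∀ᶠ r in l, Ψr r (Ru r) ≠ 0 := by
    have := hB.eventually_ne hBne
    filter_upwards [this, hrpos] with r h1 h2
    intro hzero
    apply h1
    rw [hzero]
    simp
  have hdenne : ∀ᶠ r in l,
      2*(Ψ r (Ru r)/r^3) - 2*(Y r (Ru r))^2*(Q r/r^3)*(Q' r/r^2)/(Ψr r (Ru r)/r^2) ≠ 0 :=
    hden.eventually_ne hdenL
  apply hratio.congr'
  filter_upwards [hmem, hrpos, hBne', hdenne] with r h1 h2 h3 h4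
  have hr0 : r ≠ 0 := ne_of_gt h2
  have hR0 : Ru r ≠ 0 :=
    ne_of_gt (lt_of_lt_of_le (by positivity : (0:ℝ) < c₁ * r^3) (hRu r h1).1)
  have hu := (hRu r h1).2.2
  unfold u1sq at hu
  exact (alg_aux (Ψ r (Ru r)) (Ψr r (Ru r)) (Y r (Ru r)) (Q r) (Q' r) (Ru r) r
    hr0 hR0 h3 h4 hu).symm
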